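/- Let H be a reduced, commutative, cancellative, atomic monoid, let a ∈ H, and let k, l ∈ L(a) be adjacent lengths with k < l. If d(Z_k(a), Z_l(a)) = l, then (x,y) ∈ A_a(∼_{H,mon}) for all x ∈ Z_k(a) and y ∈ Z_l(a). -/
import Mathlib


namespace CMR

variable {α : Type*} [CancelCommMonoid α]

/-- The factorization monoid `Z(H)`: the free abelian monoid over the set of atoms of `H`,
modeled as multisets of atoms. -/
abbrev Fac (α : Type*) [CancelCommMonoid α] : Type _ := Multiset {u : α // Irreducible u}

/-- The factorization homomorphism `π : Z(H) → H`. -/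
def piF (z : Fac α) : α := (z.map Subtype.val).prod

/-- `Z a`: the set of factorizations of `a`. -/
def Z (a : α) : Set (Fac α) := {z | piF z = a}

/-- `L a`: the set of lengths of `a`. -/
def L (a : α) : Set ℕ := {n | ∃ z ∈ Z a, Multiset.card z = n}

/-- `Zk a k`: the factorizations of `a` of length `k`. -/
def Zk (a : α) (k : ℕ) : Set (Fac α) := {z ∈ Z a | Multiset.card z = k}

/-- `ZM a M`: the factorizations of `a` whose length lies in `M`. -/
def ZM (a : α) (M : Set ℕ) : Set (Fac α) := {z ∈ Z a | Multiset.card z ∈ M}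

/-- The distance between two factorizations:
`d(z,z') = max (|z / gcd(z,z')|, |z' / gcd(z,z')|)`. -/
noncomputable def d (z z' : Fac α) : ℕ :=
  letI := Classical.decEq {u : α // Irreducible u}
  max (Multiset.card (z - z')) (Multiset.card (z' - z))

/-- The distance between two sets of factorizations, the minimum of pairwise
distances (with the convention `sInf ∅ = 0`). -/
noncomputable def dS (X Y : Set (Fac α)) : ℕ :=
  sInf {n : ℕ | ∃ x ∈ X, ∃ y ∈ Y, d x y = n}

/-- `k` and `l` are adjacent lengths of `a` (with `k < l`):
`L(a) ∩ [k, l] = {k, l}`. -/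
def Adjacent (a : α) (k l : ℕ) : Prop :=
  k ∈ L a ∧ l ∈ L a ∧ k < l ∧ ∀ m ∈ L a, k ≤ m → m ≤ l → m = k ∨ m = l

/-- A chain of factorizations of `a` from `z` to `z'` whose consecutive members
satisfy the step predicate `P`. -/
def Chain (a : α) (P : Fac α → Fac α → Prop) (z z' : Fac α) : Prop :=
  ∃ (n : ℕ) (c : Fin (n + 1) → Fac α),
    c 0 = z ∧ c (Fin.last n) = z' ∧ (∀ i, c i ∈ Z a) ∧
    ∀ i : Fin n, P (c i.castSucc) (c i.succ)

/-- The catenary degree of an element: the smallest `N ∈ ℕ∞` such that any two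
factorizations of `a` are connected by an `N`-chain. -/
noncomputable def cat (a : α) : ℕ∞ :=
  sInf {N : ℕ∞ | ∀ z ∈ Z a, ∀ z' ∈ Z a,
    Chain a (fun x y => (d x y : ℕ∞) ≤ N) z z'}

/-- The equal catenary degree of an element: the smallest `N ∈ ℕ∞` such that any two
factorizations of `a` of the same length are connected by an equal-length `N`-chain. -/
noncomputable def ceq (a : α) : ℕ∞ :=
  sInf {N : ℕ∞ | ∀ z ∈ Z a, ∀ z' ∈ Z a, Multiset.card z = Multiset.card z' →
    Chain a (fun x y => (d x y : ℕ∞) ≤ N ∧ Multiset.card x = Multiset.card y) z z'}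

/-- The monotone catenary degree of an element: the smallest `N ∈ ℕ∞` such that any two
factorizations of `a` (ordered by length) are connected by a monotone `N`-chain. -/
noncomputable def cmon (a : α) : ℕ∞ :=
  sInf {N : ℕ∞ | ∀ z ∈ Z a, ∀ z' ∈ Z a, Multiset.card z ≤ Multiset.card z' →
    Chain a (fun x y => (d x y : ℕ∞) ≤ N ∧ Multiset.card x ≤ Multiset.card y) z z'}

/-- The adjacent catenary degree of an element:
`c_adj(a) = sup{d(Z_k(a), Z_l(a)) : k, l ∈ L(a) adjacent}`. -/
noncomputable def cadj (a : α) : ℕ∞ :=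
  sSup {r : ℕ∞ | ∃ k l : ℕ, Adjacent a k l ∧ r = (dS (Zk a k) (Zk a l) : ℕ∞)}

noncomputable def catH (α : Type*) [CancelCommMonoid α] : ℕ∞ := ⨆ a : α, cat a
noncomputable def ceqH (α : Type*) [CancelCommMonoid α] : ℕ∞ := ⨆ a : α, ceq a
noncomputable def cmonH (α : Type*) [CancelCommMonoid α] : ℕ∞ := ⨆ a : α, cmon a
noncomputable def cadjH (α : Type*) [CancelCommMonoid α] : ℕ∞ := ⨆ a : α, cadj a

/-- `gcd(x, y) ≠ 1`: the two factorizations share an atom. -/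
def RStep (x y : Fac α) : Prop := ∃ u, u ∈ x ∧ u ∈ y

/-- `z ≈ z'`: there is an `R`-chain concatenating `z` and `z'` in `Z a`. -/
def RRel (a : α) (z z' : Fac α) : Prop := Chain a RStep z z'

/-- `z ≈_eq z'`: there is an equal-length `R`-chain concatenating `z` and `z'` in `Z a`. -/
def RRelEq (a : α) (z z' : Fac α) : Prop :=
  Chain a (fun x y => RStep x y ∧ Multiset.card x = Multiset.card y) z z'

/-- There is a monotone `R`-chain from `z` to `z'` in `Z a`. -/
def MonRChain (a : α) (z z' : Fac α) : Prop :=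
  Chain a (fun x y => RStep x y ∧ Multiset.card x ≤ Multiset.card y) z z'

/-- `μ(a)`: the supremum, over the `R`-classes `ρ` of `Z a`, of the minimal length of
an element of `ρ`. -/
noncomputable def mu (a : α) : ℕ∞ :=
  sSup {r : ℕ∞ | ∃ z ∈ Z a,
    r = ((sInf {n : ℕ | ∃ z', RRel a z z' ∧ Multiset.card z' = n} : ℕ) : ℕ∞)}

noncomputable def muH (α : Type*) [CancelCommMonoid α] : ℕ∞ := ⨆ a : α, mu a

/-- `μ_eq(a) = sup{k ∈ L(a) : Z_k(a) has more than one ≈_eq-class}`. -/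
noncomputable def mueq (a : α) : ℕ∞ :=
  sSup {r : ℕ∞ | ∃ k ∈ L a,
    (∃ z ∈ Zk a k, ∃ z' ∈ Zk a k, ¬ RRelEq a z z') ∧ r = (k : ℕ∞)}

noncomputable def mueqH (α : Type*) [CancelCommMonoid α] : ℕ∞ := ⨆ a : α, mueq a

/-- `μ_adj(a) = sup{k ∈ L(a) : d(Z_k(a), Z_l(a)) = k for the l ∈ L(a), l < k adjacent to k}`. -/
noncomputable def muadj (a : α) : ℕ∞ :=
  sSup {r : ℕ∞ | ∃ k ∈ L a,
    (∃ l : ℕ, Adjacent a l k ∧ dS (Zk a k) (Zk a l) = k) ∧ r = (k : ℕ∞)}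

noncomputable def muadjH (α : Type*) [CancelCommMonoid α] : ℕ∞ := ⨆ a : α, muadj a

/-- The monoid of relations of `H`, as a subset of `Z(H) × Z(H)`. -/
def relMon (α : Type*) [CancelCommMonoid α] : Set (Fac α × Fac α) :=
  {p | piF p.1 = piF p.2}

/-- The monoid of equal-length relations of `H`. -/
def relMonEq (α : Type*) [CancelCommMonoid α] : Set (Fac α × Fac α) :=
  {p | piF p.1 = piF p.2 ∧ Multiset.card p.1 = Multiset.card p.2}

/-- The monoid of monotone relations of `H`. -/
def relMonMon (α : Type*) [CancelCommMonoid α] : Set (Fac α × Fac α) :=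
  {p | piF p.1 = piF p.2 ∧ Multiset.card p.1 ≤ Multiset.card p.2}

/-- `p` is an atom (irreducible element) of the reduced submonoid `S` of `Z(H) × Z(H)`. -/
def IsAtomIn (S : Set (Fac α × Fac α)) (p : Fac α × Fac α) : Prop :=
  p ∈ S ∧ p ≠ 0 ∧ ∀ q ∈ S, ∀ r ∈ S, p = q + r → q = 0 ∨ r = 0

/-- `A_a(S) = A(S) ∩ (Z(a) × Z(a))`. -/
def AtomsAt (S : Set (Fac α × Fac α)) (a : α) : Set (Fac α × Fac α) :=
  {p | IsAtomIn S p ∧ p.1 ∈ Z a ∧ p.2 ∈ Z a}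

/-- The tame degree `t(a, x)`. -/
noncomputable def tdeg (a : α) (x : Fac α) : ℕ∞ :=
  sInf {N : ℕ∞ | ∀ z ∈ Z a, (∃ w ∈ Z a, x ≤ w) →
    ∃ z' ∈ Z a, x ≤ z' ∧ (d z z' : ℕ∞) ≤ N}

/-- The tame degree `t(H) = sup{t(a, u) : a ∈ H, u ∈ A(H)}`. -/
noncomputable def tH (α : Type*) [CancelCommMonoid α] : ℕ∞ :=
  ⨆ (a : α) (u : {u : α // Irreducible u}), tdeg a {u}

/-- The `m`-adjacent catenary degree of an element:
`c_{ad,m}(a) = sup{d(Z_k(a), Z_{[k-m,k)}(a)) : k ∈ L(a)}`. -/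
noncomputable def cadm (m : ℕ) (a : α) : ℕ∞ :=
  sSup {r : ℕ∞ | ∃ k ∈ L a, r = (dS (Zk a k) (ZM a (Set.Ico (k - m) k)) : ℕ∞)}

noncomputable def cadmH (α : Type*) [CancelCommMonoid α] (m : ℕ) : ℕ∞ := ⨆ a : α, cadm m a

/-- `μ_{ad,m}(a) = sup{k ∈ L(a) : d(Z_k(a), Z_{[k-m,k)}(a)) = k}`. -/
noncomputable def muadm (m : ℕ) (a : α) : ℕ∞ :=
  sSup {r : ℕ∞ | ∃ k ∈ L a, dS (Zk a k) (ZM a (Set.Ico (k - m) k)) = k ∧ r = (k : ℕ∞)}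

noncomputable def muadmH (α : Type*) [CancelCommMonoid α] (m : ℕ) : ℕ∞ := ⨆ a : α, muadm m a

/-- `H` is reduced: the only unit is `1`. -/
def Reduced (α : Type*) [CancelCommMonoid α] : Prop := ∀ a : α, IsUnit a → a = 1

/-- `H` is atomic: every element is a product of atoms. -/
def Atomic (α : Type*) [CancelCommMonoid α] : Prop := ∀ a : α, ∃ z : Fac α, piF z = a

/-- The ascending chain condition on principal ideals. -/
def ACCP (α : Type*) [CancelCommMonoid α] : Prop :=
  ∀ f : ℕ → α, (∀ n, f (n + 1) ∣ f n) → ∃ N, ∀ n, N ≤ n → f N ∣ f n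

theorem piF_add' {α : Type*} [CancelCommMonoid α] (s t : Fac α) :
    piF (s + t) = piF s * piF t := by
  simp [piF]

/-- Let `H` be a reduced, commutative, cancellative, atomic monoid, `a ∈ H`, and let
`k, l ∈ L(a)` be adjacent lengths with `k < l`. If `d(Z_k(a), Z_l(a)) = l`, then
`(x, y) ∈ A_a(∼_{H,mon})` for all `x ∈ Z_k(a)` and `y ∈ Z_l(a)`. -/
theorem stmt3 {α : Type*} [CancelCommMonoid α]
    (hred : Reduced α) (hatomic : Atomic α) (a : α) (k l : ℕ)
    (hadj : Adjacent a k l) (hd : dS (Zk a k) (Zk a l) = l) :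
    ∀ x ∈ Zk a k, ∀ y ∈ Zk a l, (x, y) ∈ AtomsAt (relMonMon α) a := by
  letI := Classical.decEq {u : α // Irreducible u}
  obtain ⟨hkL, hlL, hkl, hbetween⟩ := hadj
  rintro x ⟨hx, hxk⟩ y ⟨hy, hyl⟩
  -- key: for any w ∈ Zk a k, w' ∈ Zk a l, l ≤ d w w'
  have hge : ∀ w ∈ Zk a k, ∀ w' ∈ Zk a l, l ≤ d w w' := by
    intro w hw w' hw'
    rw [← hd]
    exact Nat.sInf_le ⟨w, hw, w', hw', rfl⟩
  refine ⟨⟨⟨hx.trans hy.symm, by simp [hxk, hyl, hkl.le]⟩, ?_, ?_⟩, hx, hy⟩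
  · intro h0
    have : y = 0 := congrArg Prod.snd h0
    rw [this] at hyl
    simp at hyl
    omega
  · rintro q ⟨hq1, hq2⟩ r ⟨hr1, hr2⟩ heq
    have hx1 : x = q.1 + r.1 := congrArg Prod.fst heq
    have hy1 : y = q.2 + r.2 := congrArg Prod.snd heq
    set z : Fac α := q.1 + r.2 with hzdef
    have hz : piF z = a := by
      rw [hzdef, piF_add', hq1, ← piF_add', ← hy1, hy]
    have hcx : Multiset.card q.1 + Multiset.card r.1 = k := by
      rw [← hxk, hx1]; simp
    have hcy : Multiset.card q.2 + Multiset.card r.2 = l := by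
      rw [← hyl, hy1]; simp
    have hcz : Multiset.card z = Multiset.card q.1 + Multiset.card r.2 := by
      simp [hzdef]
    have hzL : Multiset.card z ∈ L a := ⟨z, hz, rfl⟩
    have hkz : k ≤ Multiset.card z := by omega
    have hzl : Multiset.card z ≤ l := by omega
    rcases hbetween _ hzL hkz hzl with hck | hcl
    · -- card z = k, show r = 0
      right
      have hr20 : Multiset.card r.2 = 0 := by
        have hld := hge z ⟨hz, hck⟩ y ⟨hy, hyl⟩
        by_contra hne
        have h1 : Multiset.card (z - y) ≤ Multiset.card z :=
          Multiset.card_le_card (tsub_le_self)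
        have h2 : y - z ≤ y - r.2 := tsub_le_tsub_left (le_add_self) y
        have h3 : Multiset.card (y - r.2) = l - Multiset.card r.2 := by
          rw [Multiset.card_sub (by rw [hy1]; exact le_add_self), hyl]
        have h4 : Multiset.card (y - z) ≤ l - Multiset.card r.2 :=
          h3 ▸ Multiset.card_le_card h2
        have : d z y ≤ max k (l - Multiset.card r.2) := by
          unfold d
          exact max_le_max (hck ▸ h1) h4
        omega
      have hr10 : Multiset.card r.1 = 0 := by omega
      have : r.1 = 0 := Multiset.card_eq_zero.mp hr10
      have h2 : r.2 = 0 := Multiset.card_eq_zero.mp hr20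
      exact Prod.ext this h2
    · -- card z = l, show q = 0
      left
      have hq10 : Multiset.card q.1 = 0 := by
        have hld := hge x ⟨hx, hxk⟩ z ⟨hz, hcl⟩
        by_contra hne
        have h1 : Multiset.card (x - z) ≤ Multiset.card x :=
          Multiset.card_le_card (tsub_le_self)
        have h2 : z - x ≤ z - q.1 := tsub_le_tsub_left (by rw [hx1]; exact le_self_add) z
        have h3 : Multiset.card (z - q.1) = l - Multiset.card q.1 := by
          rw [Multiset.card_sub (le_self_add), hcl]
        have h4 : Multiset.card (z - x) ≤ l - Multiset.card q.1 :=
          h3 ▸ Multiset.card_le_card h2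
        have : d x z ≤ max k (l - Multiset.card q.1) := by
          unfold d
          exact max_le_max (hxk ▸ h1) h4
        omega
      have hq20 : Multiset.card q.2 = 0 := by omega
      exact Prod.ext (Multiset.card_eq_zero.mp hq10) (Multiset.card_eq_zero.mp hq20)

end CMR
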